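/- Let p ≥ 1, let P be a Borel probability measure on ℝ^d with finite p-th moment, let k > 0, let x₀ ≠ 0 be a real number, and let U : ℝ → ℝ be non-decreasing with lim_{x→−∞} U(x) = −∞. Suppose that there do NOT exist constants x̲ > 0 and C₁ > 0 with U(−x̲) < 0 and U(x) ≥ −C₁(1 + |x|^p) for all x ≤ −x̲. Then for every w ∈ ℝ^d with w ≠ 0 and E_P[U(x₀ + x₀⟨w, X⟩)] < ∞, one has u(k,w) := inf_{Q ∈ B_k(P)} E_Q[U(x₀ + x₀⟨w, X⟩)] = −∞. -/

import Mathlib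

open MeasureTheory Filter
open scoped ENNReal

noncomputable section

abbrev Evec (d : ℕ) : Type := EuclideanSpace ℝ (Fin d)

def couplings {d : ℕ} (P Q : Measure (Evec d)) : Set (Measure (Evec d × Evec d)) :=
  {π | IsProbabilityMeasure π ∧ π.map Prod.fst = P ∧ π.map Prod.snd = Q}

noncomputable def Wdist {d : ℕ} (p : ℝ) (P Q : Measure (Evec d)) : ℝ≥0∞ :=
  ⨅ π ∈ couplings P Q, (∫⁻ z, (‖z.1 - z.2‖₊ : ℝ≥0∞) ^ p ∂π) ^ (1 / p)

def wBall {d : ℕ} (p k : ℝ) (P : Measure (Evec d)) : Set (Measure (Evec d)) :=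
  {Q | IsProbabilityMeasure Q ∧ (∫⁻ x, (‖x‖₊ : ℝ≥0∞) ^ p ∂Q) < ⊤ ∧ Wdist p P Q ≤ ENNReal.ofReal k}

/-- The (extended-real-valued) expectation `E_Q[f] = E_Q[f⁺] − E_Q[f⁻]`. -/
noncomputable def eexp {α : Type*} [MeasurableSpace α] (Q : Measure α) (f : α → ℝ) : EReal :=
  ((∫⁻ x, ENNReal.ofReal (f x) ∂Q : ℝ≥0∞) : EReal) - ((∫⁻ x, ENNReal.ofReal (-(f x)) ∂Q : ℝ≥0∞) : EReal)

/-- The robust value `u(k,w) = inf_{Q ∈ B_k(P)} E_Q[U(x₀ + x₀⟨w,X⟩)]`. -/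
noncomputable def uval {d : ℕ} (p k x₀ : ℝ) (P : Measure (Evec d)) (U : ℝ → ℝ) (w : Evec d) : EReal :=
  ⨅ Q ∈ wBall p k P, eexp Q (fun x => U (x₀ + x₀ * (inner ℝ w x : ℝ)))

set_option maxHeartbeats 2000000 in
/-- if the lower growth condition (Assumption 1) fails, the problem is
ill-posed: `u(k,w) = −∞` for every `w ≠ 0` with `E_P[U(x₀+x₀⟨w,X⟩)] < ∞`. -/
theorem uval_eq_bot_of_not_growth {d : ℕ} (p k x₀ : ℝ) (hp : 1 ≤ p) (hk : 0 < k) (hx₀ : x₀ ≠ 0)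
    (P : Measure (Evec d)) [IsProbabilityMeasure P]
    (hmom : (∫⁻ x, (‖x‖₊ : ℝ≥0∞) ^ p ∂P) < ⊤)
    (U : ℝ → ℝ) (hU : Monotone U) (hUbot : Tendsto U atBot atBot)
    (hnot : ¬ ∃ xu C₁ : ℝ, 0 < xu ∧ 0 < C₁ ∧ U (-xu) < 0 ∧
      ∀ x : ℝ, x ≤ -xu → -C₁ * (1 + |x| ^ p) ≤ U x)
    (w : Evec d) (hw : w ≠ 0)
    (hfin : eexp P (fun x => U (x₀ + x₀ * (inner ℝ w x : ℝ))) < ⊤) :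
    uval p k x₀ P U w = ⊥ := by
  classical
  have hp0 : (0:ℝ) < p := lt_of_lt_of_le one_pos hp
  set f : Evec d → ℝ := fun x => U (x₀ + x₀ * (inner ℝ w x : ℝ)) with hf
  have hinner : Measurable fun x : Evec d => (inner ℝ w x : ℝ) :=
    (continuous_const.inner continuous_id).measurable
  have hfm : Measurable f :=
    hU.measurable.comp (measurable_const.add (measurable_const.mul hinner))
  have hgm : Measurable fun x : Evec d => (x, x) := measurable_id.prodMk measurable_id
  have hcostm : Measurable fun a : Evec d × Evec d => (‖a.1 - a.2‖₊ : ℝ≥0∞) ^ p :=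
    (ENNReal.continuous_rpow_const.measurable).comp
      ((measurable_fst.sub measurable_snd).nnnorm.coe_nnreal_ennreal)
  have hnormm : Measurable fun x : Evec d => (‖x‖₊ : ℝ≥0∞) ^ p :=
    (ENNReal.continuous_rpow_const.measurable).comp (measurable_nnnorm.coe_nnreal_ennreal)
  -- P belongs to its own ball
  have hPball : P ∈ wBall p k P := by
    refine ⟨inferInstance, hmom, ?_⟩
    have hcoup : P.map (fun x => (x, x)) ∈ couplings P P := by
      refine ⟨Measure.isProbabilityMeasure_map hgm.aemeasurable, ?_, ?_⟩
      · rw [Measure.map_map measurable_fst hgm]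
        simp [Function.comp_def]
      · rw [Measure.map_map measurable_snd hgm]
        simp [Function.comp_def]
    have h1 : Wdist p P P ≤
        (∫⁻ z, (‖z.1 - z.2‖₊ : ℝ≥0∞) ^ p ∂(P.map (fun x => (x, x)))) ^ (1 / p) :=
      iInf₂_le _ hcoup
    have h2 : (∫⁻ z, (‖z.1 - z.2‖₊ : ℝ≥0∞) ^ p ∂(P.map (fun x => (x, x)))) = 0 := by
      rw [lintegral_map hcostm hgm]
      simp [ENNReal.zero_rpow_of_pos hp0]
    rw [h2, ENNReal.zero_rpow_of_pos (by positivity : (0:ℝ) < 1/p)] at h1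
    exact le_trans h1 zero_le
  by_cases hBtop : (∫⁻ x, ENNReal.ofReal (-(f x)) ∂P) = ⊤
  · have hbot : eexp P f = ⊥ := by
      rw [eexp, hBtop]
      simp [EReal.sub_top]
    have hle : uval p k x₀ P U w ≤ eexp P f := by
      unfold uval
      exact iInf₂_le P hPball
    rw [hbot] at hle
    exact le_bot_iff.mp hle
  -- now the negative part under P is finite; so is the positive part
  set A := ∫⁻ x, ENNReal.ofReal (f x) ∂P with hA
  set B := ∫⁻ x, ENNReal.ofReal (-(f x)) ∂P with hB
  clear_value A B
  have hAne : A ≠ ⊤ := by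
    intro h
    rw [eexp, ← hA, ← hB, h] at hfin
    rw [show ((B : EReal)) = ((B.toReal : ℝ) : EReal) by
        rw [← ENNReal.ofReal_toReal hBtop]; simp [EReal.coe_ennreal_ofReal,
          max_eq_left ENNReal.toReal_nonneg]] at hfin
    simp [EReal.top_sub_coe] at hfin
  -- constants
  set M := ∫⁻ x, (‖x‖₊ : ℝ≥0∞) ^ p ∂P with hM
  obtain ⟨Mr, hMr0, hMeq⟩ : ∃ r : ℝ, 0 ≤ r ∧ M = ENNReal.ofReal r :=
    ⟨M.toReal, ENNReal.toReal_nonneg, (ENNReal.ofReal_toReal hmom.ne).symm⟩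
  have hw0 : (0:ℝ) < ‖w‖ := norm_pos_iff.mpr hw
  have hwne : ‖w‖ ≠ 0 := ne_of_gt hw0
  set c₄ : ℝ := (1/|x₀| + 1)/‖w‖ with hc₄
  have hc₄0 : 0 < c₄ := by rw [hc₄]; positivity
  obtain ⟨c₃, hc₃0, hc₃⟩ : ∃ c : ℝ, 0 < c ∧ c₄ ^ p = c :=
    ⟨c₄ ^ p, Real.rpow_pos_of_pos hc₄0 p, rfl⟩
  obtain ⟨tp, htp0, htp⟩ : ∃ c : ℝ, 0 < c ∧ (2:ℝ) ^ p = c :=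
    ⟨2 ^ p, Real.rpow_pos_of_pos two_pos p, rfl⟩
  obtain ⟨kp, hkp0, hkp⟩ : ∃ c : ℝ, 0 < c ∧ k ^ p = c :=
    ⟨k ^ p, Real.rpow_pos_of_pos hk p, rfl⟩
  obtain ⟨δ, hδ0, hδk⟩ : ∃ δ : ℝ, 0 < δ ∧ δ * (tp * (Mr + c₃ + 1)) = kp := by
    refine ⟨kp / (tp * (Mr + c₃ + 1)), by positivity, ?_⟩
    field_simp
  set ε : ℝ := min 1 δ with hε
  have hε0 : 0 < ε := lt_min one_pos hδ0
  clear_value ε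
  -- the threshold
  obtain ⟨b, hb⟩ : ∃ b : ℝ, U b < 0 := (hUbot.eventually (eventually_lt_atBot 0)).exists
  set xu : ℝ := max 1 (-b) with hxu
  have hxu0 : 0 < xu := lt_of_lt_of_le one_pos (le_max_left _ _)
  have hxu1 : 1 ≤ xu := le_max_left _ _
  have hUxu : U (-xu) < 0 := lt_of_le_of_lt (hU (by
    have := le_max_right 1 (-b); linarith)) hb
  -- main claim
  have main : ∀ C : ℝ, 0 < C →
      uval p k x₀ P U w ≤ (A : EReal) - ((ENNReal.ofReal (C * ε) : ℝ≥0∞) : EReal) := by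
    intro C hC
    obtain ⟨x, hxle, hUx⟩ : ∃ x : ℝ, x ≤ -xu ∧ U x < -C * (1 + |x| ^ p) := by
      by_contra hcon
      push_neg at hcon
      exact hnot ⟨xu, C, hxu0, hC, hUxu, fun x hx => (hcon x hx)⟩
    have hx1 : 1 ≤ |x| := by
      rw [abs_of_nonpos (by linarith)]
      linarith
    set t : ℝ := |x| ^ p with ht
    clear_value t
    have ht1 : 1 ≤ t := by rw [ht]; exact Real.one_le_rpow hx1 (le_of_lt hp0)
    have hUxneg : U x < 0 := lt_of_lt_of_le hUx (by nlinarith)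
    set lam : ℝ := (x / x₀ - 1) / (‖w‖ ^ 2) with hlam
    set z : Evec d := lam • w with hz
    clear_value z
    have hfz : f z = U x := by
      have hzin : (inner ℝ w z : ℝ) = lam * ‖w‖ ^ 2 := by
        rw [hz, real_inner_smul_right, real_inner_self_eq_norm_sq]
      simp only [hf, hzin, hlam]
      congr 1
      field_simp
      ring
    -- norm bound on z
    have hlamabs : |lam| ≤ (|x|/|x₀| + 1)/‖w‖^2 := by
      rw [hlam, abs_div, abs_of_nonneg (sq_nonneg ‖w‖)]
      have h1 : |x / x₀ - 1| ≤ |x|/|x₀| + 1 := by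
        calc |x / x₀ - 1| = |x/x₀ + (-1)| := by ring_nf
          _ ≤ |x/x₀| + |(-1:ℝ)| := abs_add_le _ _
          _ = |x|/|x₀| + 1 := by rw [abs_div]; simp
      gcongr
    have hnz : ‖z‖ ≤ c₄ * |x| := by
      have h1 : ‖z‖ = |lam| * ‖w‖ := by rw [hz, norm_smul, Real.norm_eq_abs]
      have h2 : |lam| * ‖w‖ ≤ (|x|/|x₀| + 1)/‖w‖ := by
        calc |lam| * ‖w‖ ≤ ((|x|/|x₀| + 1)/‖w‖^2) * ‖w‖ :=
              mul_le_mul_of_nonneg_right hlamabs hw0.le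
          _ = (|x|/|x₀| + 1)/‖w‖ := by field_simp
      have h3 : |x|/|x₀| + 1 ≤ (1/|x₀| + 1) * |x| := by
        have hx₀0 : 0 < |x₀| := abs_pos.mpr hx₀
        have he : (1/|x₀| + 1) * |x| = |x|/|x₀| + |x| := by ring
        rw [he]
        linarith
      rw [h1]
      calc |lam| * ‖w‖ ≤ (|x|/|x₀| + 1)/‖w‖ := h2
        _ ≤ ((1/|x₀| + 1) * |x|)/‖w‖ := by gcongr
        _ = c₄ * |x| := by rw [hc₄]; ring
    have hnzp : ‖z‖ ^ p ≤ c₃ * (1 + t) := by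
      have h1 : ‖z‖ ^ p ≤ (c₄ * |x|) ^ p :=
        Real.rpow_le_rpow (norm_nonneg z) hnz hp0.le
      have h2 : (c₄ * |x|) ^ p = c₃ * t := by
        rw [Real.mul_rpow hc₄0.le (abs_nonneg x), hc₃, ht]
      nlinarith
    -- the mass and the perturbed measure
    set mr : ℝ := min 1 (δ/(1+t)) with hmr
    clear_value mr
    have ht0 : (0:ℝ) < 1 + t := by linarith
    have hmr0 : 0 < mr := by rw [hmr]; exact lt_min one_pos (by positivity)
    have hmr1 : mr ≤ 1 := by rw [hmr]; exact min_le_left _ _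
    set m : ℝ≥0∞ := ENNReal.ofReal mr with hm
    clear_value m
    have hm1 : m ≤ 1 := by
      rw [hm, ← ENNReal.ofReal_one]
      exact ENNReal.ofReal_le_ofReal hmr1
    have hmne : m ≠ ⊤ := by rw [hm]; exact ENNReal.ofReal_ne_top
    set Q : Measure (Evec d) := (1 - m) • P + m • Measure.dirac z with hQ
    clear_value Q
    have hQuniv : Q Set.univ = 1 := by
      rw [hQ]
      simp only [Measure.add_apply, Measure.smul_apply, smul_eq_mul, measure_univ, mul_one]
      exact tsub_add_cancel_of_le hm1
    have hQprob : IsProbabilityMeasure Q := ⟨hQuniv⟩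
    -- lintegrals against Q
    have hQint : ∀ g : Evec d → ℝ≥0∞, Measurable g →
        ∫⁻ y, g y ∂Q = (1 - m) * ∫⁻ y, g y ∂P + m * g z := by
      intro g hg
      rw [hQ, lintegral_add_measure, lintegral_smul_measure, lintegral_smul_measure,
        lintegral_dirac' _ hg, smul_eq_mul, smul_eq_mul]
    -- moment of Q
    have hzp_ne : (‖z‖₊ : ℝ≥0∞) ^ p ≠ ⊤ :=
      (ENNReal.rpow_lt_top_of_nonneg hp0.le ENNReal.coe_ne_top).ne
    have hQmom : (∫⁻ x, (‖x‖₊ : ℝ≥0∞) ^ p ∂Q) < ⊤ := by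
      rw [hQint _ hnormm]
      refine ENNReal.add_lt_top.mpr ⟨?_, ?_⟩
      · exact lt_of_le_of_lt (mul_le_of_le_one_left zero_le tsub_le_self) hmom
      · exact ENNReal.mul_lt_top hmne.lt_top hzp_ne.lt_top
    -- the coupling
    have hg2m : Measurable fun x : Evec d => (x, z) := measurable_id.prodMk measurable_const
    set π : Measure (Evec d × Evec d) :=
      (1 - m) • P.map (fun x => (x, x)) + m • P.map (fun x => (x, z)) with hπ
    clear_value π
    have hmap1 : (P.map fun x : Evec d => (x, x)) Set.univ = 1 := by
      haveI := Measure.isProbabilityMeasure_map (μ := P) hgm.aemeasurable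
      exact measure_univ
    have hmap2 : (P.map fun x : Evec d => (x, z)) Set.univ = 1 := by
      haveI := Measure.isProbabilityMeasure_map (μ := P) hg2m.aemeasurable
      exact measure_univ
    have hπc : π ∈ couplings P Q := by
      refine ⟨⟨?_⟩, ?_, ?_⟩
      · rw [hπ]
        simp only [Measure.add_apply, Measure.smul_apply, smul_eq_mul, hmap1, hmap2, mul_one]
        exact tsub_add_cancel_of_le hm1
      · rw [hπ, Measure.map_add _ _ measurable_fst, Measure.map_smul, Measure.map_smul,
          Measure.map_map measurable_fst hgm, Measure.map_map measurable_fst hg2m]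
        have e1 : (Prod.fst ∘ fun x : Evec d => (x, x)) = id := rfl
        have e2 : (Prod.fst ∘ fun x : Evec d => (x, z)) = id := rfl
        rw [e1, e2, Measure.map_id, ← add_smul, tsub_add_cancel_of_le hm1, one_smul]
      · rw [hπ, Measure.map_add _ _ measurable_snd, Measure.map_smul, Measure.map_smul,
          Measure.map_map measurable_snd hgm, Measure.map_map measurable_snd hg2m]
        have e1 : (Prod.snd ∘ fun x : Evec d => (x, x)) = id := rfl
        have e2 : (Prod.snd ∘ fun x : Evec d => (x, z)) = fun _ : Evec d => z := rfl
        rw [e1, e2, Measure.map_id, Measure.map_const, measure_univ, one_smul, hQ]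
    -- cost bound
    have hcost : (∫⁻ a, (‖a.1 - a.2‖₊ : ℝ≥0∞) ^ p ∂π) ≤ ENNReal.ofReal (k ^ p) := by
      have hc1 : (∫⁻ a, (‖a.1 - a.2‖₊ : ℝ≥0∞) ^ p ∂(P.map fun x => (x, x))) = 0 := by
        rw [lintegral_map hcostm hgm]
        simp [ENNReal.zero_rpow_of_pos hp0]
      have hc2 : (∫⁻ a, (‖a.1 - a.2‖₊ : ℝ≥0∞) ^ p ∂(P.map fun x => (x, z)))
          ≤ 2 ^ p * (M + (‖z‖₊ : ℝ≥0∞) ^ p) := by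
        rw [lintegral_map hcostm hg2m]
        have hpt : ∀ y : Evec d, (‖y - z‖₊ : ℝ≥0∞) ^ p
            ≤ 2 ^ p * ((‖y‖₊ : ℝ≥0∞) ^ p + (‖z‖₊ : ℝ≥0∞) ^ p) := by
          intro y
          have h1 : (‖y - z‖₊ : ℝ≥0∞) ≤ (‖y‖₊ : ℝ≥0∞) + (‖z‖₊ : ℝ≥0∞) := by
            norm_cast
            exact nnnorm_sub_le y z
          calc (‖y - z‖₊ : ℝ≥0∞) ^ p ≤ ((‖y‖₊ : ℝ≥0∞) + (‖z‖₊ : ℝ≥0∞)) ^ p :=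
                ENNReal.rpow_le_rpow h1 hp0.le
            _ ≤ (2:ℝ≥0∞) ^ (p - 1) * ((‖y‖₊ : ℝ≥0∞) ^ p + (‖z‖₊ : ℝ≥0∞) ^ p) :=
                ENNReal.rpow_add_le_mul_rpow_add_rpow _ _ hp
            _ ≤ (2:ℝ≥0∞) ^ p * ((‖y‖₊ : ℝ≥0∞) ^ p + (‖z‖₊ : ℝ≥0∞) ^ p) := by
                exact mul_le_mul_left
                  (ENNReal.rpow_le_rpow_of_exponent_le one_le_two (by linarith)) _
        calc (∫⁻ y, (‖y - z‖₊ : ℝ≥0∞) ^ p ∂P)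
            ≤ ∫⁻ y, 2 ^ p * ((‖y‖₊ : ℝ≥0∞) ^ p + (‖z‖₊ : ℝ≥0∞) ^ p) ∂P :=
              lintegral_mono hpt
          _ = 2 ^ p * (M + (‖z‖₊ : ℝ≥0∞) ^ p) := by
              rw [lintegral_const_mul _ (f := fun y => (‖y‖₊ : ℝ≥0∞) ^ p + (‖z‖₊ : ℝ≥0∞) ^ p) (hnormm.add measurable_const),
                lintegral_add_right _ measurable_const, lintegral_const, measure_univ, mul_one,
                hM]
      have hπint : (∫⁻ a, (‖a.1 - a.2‖₊ : ℝ≥0∞) ^ p ∂π)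
          = (1 - m) * (∫⁻ a, (‖a.1 - a.2‖₊ : ℝ≥0∞) ^ p ∂(P.map fun x => (x, x)))
            + m * (∫⁻ a, (‖a.1 - a.2‖₊ : ℝ≥0∞) ^ p ∂(P.map fun x => (x, z))) := by
        rw [hπ, lintegral_add_measure, lintegral_smul_measure, lintegral_smul_measure,
          smul_eq_mul, smul_eq_mul]
      rw [hπint, hc1, mul_zero, zero_add]
      -- convert everything to ofReal
      have hzof : (‖z‖₊ : ℝ≥0∞) ^ p = ENNReal.ofReal (‖z‖ ^ p) := by
        rw [← enorm_eq_nnnorm, ← ofReal_norm]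
        exact ENNReal.ofReal_rpow_of_nonneg (norm_nonneg z) hp0.le
      have h2of : (2:ℝ≥0∞) ^ p = ENNReal.ofReal (2 ^ p) := by
        rw [← ENNReal.ofReal_rpow_of_pos two_pos]
        norm_num
      have hb1 : m * (∫⁻ a, (‖a.1 - a.2‖₊ : ℝ≥0∞) ^ p ∂(P.map fun x => (x, z)))
          ≤ m * (ENNReal.ofReal (2 ^ p)
              * (ENNReal.ofReal Mr + ENNReal.ofReal (c₃ * (1 + t)))) := by
        refine mul_le_mul' le_rfl ?_
        refine le_trans hc2 ?_
        rw [h2of, hMeq, hzof]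
        exact mul_le_mul' le_rfl (add_le_add le_rfl
          (ENNReal.ofReal_le_ofReal hnzp))
      refine le_trans hb1 ?_
      rw [hm, ← ENNReal.ofReal_add hMr0 (by nlinarith : (0:ℝ) ≤ c₃ * (1 + t)),
        ← ENNReal.ofReal_mul (by nlinarith [Real.rpow_pos_of_pos two_pos p] : (0:ℝ) ≤ (2:ℝ) ^ p),
        ← ENNReal.ofReal_mul hmr0.le]
      refine ENNReal.ofReal_le_ofReal ?_
      -- real arithmetic
      have hmrδ : mr * (1 + t) ≤ δ := by
        have : mr ≤ δ/(1+t) := by rw [hmr]; exact min_le_right _ _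
        calc mr * (1 + t) ≤ (δ/(1+t)) * (1+t) :=
              mul_le_mul_of_nonneg_right this ht0.le
          _ = δ := div_mul_cancel₀ δ ht0.ne'
      have hS : Mr + c₃ * (1 + t) ≤ (Mr + c₃) * (1 + t) := by
        nlinarith [mul_nonneg hMr0 (by linarith : (0:ℝ) ≤ t)]
      rw [htp, hkp]
      calc mr * (tp * (Mr + c₃ * (1 + t)))
          ≤ mr * (tp * ((Mr + c₃) * (1 + t))) :=
            mul_le_mul_of_nonneg_left (mul_le_mul_of_nonneg_left hS htp0.le) hmr0.le
        _ = (mr * (1 + t)) * (tp * (Mr + c₃)) := by ring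
        _ ≤ δ * (tp * (Mr + c₃)) := by
            refine mul_le_mul_of_nonneg_right hmrδ (by positivity)
        _ ≤ δ * (tp * (Mr + c₃ + 1)) := by
            refine mul_le_mul_of_nonneg_left ?_ hδ0.le
            nlinarith
        _ = kp := hδk
    -- Wasserstein distance bound
    have hWd : Wdist p P Q ≤ ENNReal.ofReal k := by
      have h1 : Wdist p P Q ≤ (∫⁻ a, (‖a.1 - a.2‖₊ : ℝ≥0∞) ^ p ∂π) ^ (1 / p) :=
        iInf₂_le _ hπc
      refine le_trans h1 ?_
      have h2 : (∫⁻ a, (‖a.1 - a.2‖₊ : ℝ≥0∞) ^ p ∂π) ^ (1/p)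
          ≤ (ENNReal.ofReal (k ^ p)) ^ (1/p) :=
        ENNReal.rpow_le_rpow hcost (by positivity)
      refine le_trans h2 ?_
      rw [← ENNReal.ofReal_rpow_of_pos hk, ← ENNReal.rpow_mul,
        mul_one_div_cancel hp0.ne', ENNReal.rpow_one]
    have hQball : Q ∈ wBall p k P := ⟨hQprob, hQmom, hWd⟩
    -- expectation bound
    have hposm : Measurable fun y : Evec d => ENNReal.ofReal (f y) :=
      ENNReal.measurable_ofReal.comp hfm
    have hnegm : Measurable fun y : Evec d => ENNReal.ofReal (-(f y)) :=
      ENNReal.measurable_ofReal.comp hfm.neg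
    have hposQ : (∫⁻ y, ENNReal.ofReal (f y) ∂Q) ≤ A := by
      rw [hQint _ hposm, hfz, ENNReal.ofReal_eq_zero.mpr hUxneg.le, mul_zero, add_zero, ← hA]
      exact mul_le_of_le_one_left zero_le tsub_le_self
    have hnegQ : ENNReal.ofReal (C * ε) ≤ (∫⁻ y, ENNReal.ofReal (-(f y)) ∂Q) := by
      rw [hQint _ hnegm, hfz]
      refine le_trans ?_ le_add_self
      rw [hm, ← ENNReal.ofReal_mul hmr0.le]
      refine ENNReal.ofReal_le_ofReal ?_
      have h1 : C * (1 + t) ≤ -U x := by nlinarith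
      have h2 : C * ε ≤ mr * (C * (1 + t)) := by
        have h3 : ε ≤ mr * (1 + t) := by
          rw [hε, hmr]
          rcases le_total (1:ℝ) (δ/(1+t)) with h | h
          · rw [min_eq_left h]
            have : min 1 δ ≤ 1 := min_le_left _ _
            nlinarith
          · rw [min_eq_right h]
            have hδle : δ/(1+t) * (1+t) = δ := by field_simp
            have : min 1 δ ≤ δ := min_le_right _ _
            nlinarith
        nlinarith
      exact le_trans h2 (by nlinarith)
    have heexp : eexp Q f ≤ (A : EReal) - ((ENNReal.ofReal (C * ε) : ℝ≥0∞) : EReal) := by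
      rw [eexp]
      exact EReal.sub_le_sub (EReal.coe_ennreal_le_coe_ennreal_iff.mpr hposQ)
        (EReal.coe_ennreal_le_coe_ennreal_iff.mpr hnegQ)
    have hle : uval p k x₀ P U w ≤ eexp Q f := by
      unfold uval
      exact iInf₂_le Q hQball
    exact le_trans hle heexp
  -- conclude
  rw [EReal.eq_bot_iff_forall_lt]
  intro y
  set C : ℝ := max 1 ((A.toReal - y + 1)/ε) with hC
  have hC0 : 0 < C := lt_of_lt_of_le one_pos (le_max_left _ _)
  have hub := main C hC0
  have hCε : A.toReal - y + 1 ≤ C * ε := by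
    have h1 : (A.toReal - y + 1)/ε ≤ C := le_max_right _ _
    have h2 : (A.toReal - y + 1)/ε * ε ≤ C * ε := mul_le_mul_of_nonneg_right h1 hε0.le
    rwa [div_mul_cancel₀ _ hε0.ne'] at h2
  have hAeq : (A : EReal) = ((A.toReal : ℝ) : EReal) := by
    rw [← ENNReal.ofReal_toReal hAne]
    simp [EReal.coe_ennreal_ofReal, max_eq_left ENNReal.toReal_nonneg]
  have hCeq : ((ENNReal.ofReal (C * ε) : ℝ≥0∞) : EReal) = ((C * ε : ℝ) : EReal) := by
    simp [EReal.coe_ennreal_ofReal, max_eq_left (by positivity : (0:ℝ) ≤ C * ε)]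
  rw [hAeq, hCeq, ← EReal.coe_sub] at hub
  refine lt_of_le_of_lt hub ?_
  rw [EReal.coe_lt_coe_iff]
  linarith
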